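/- For a Lagrangian mechanical system with metric tensor g_{ij}, suppose the canonical nonlinear connection N₀ is metric for the canonical semispray S₀ (i.e. S₀(g_{ij}) − g_{im}N₀^m_j − g_{mj}N₀^m_i = 0) and the Cartan tensor C_{ijk} = (1/2)∂g_{ij}/∂y^k is totally symmetric. Then the dynamical covariant derivative of g with respect to the evolution pair (S, N), where S = S₀ + (1/2)V^k∂/∂y^k and N^i_j = N₀^i_j − (1/4)∂V^i/∂y^j, equals g_{ij|} = (1/4)(∂σ_i/∂y^j + ∂σ_j/∂y^i), with σ_i = g_{ij}V^j. Consequently, the evolution nonlinear connection is metric (g_{ij|} = 0) if and only if the (0,2)-tensor ∂σ_i/∂y^j is skew-symmetric in i,j. -/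

import Mathlib

/-- The phase space `TM` in local coordinates: points `(x, y)`. -/
abbrev TP (n : ℕ) := (Fin n → ℝ) × (Fin n → ℝ)

/-- Partial derivative with respect to the fibre coordinate `y^i`. -/
noncomputable def pdy {n : ℕ} (i : Fin n) (f : TP n → ℝ) : TP n → ℝ :=
  fun p => fderiv ℝ f p (0, Pi.single i 1)

/-- The dynamical covariant derivative `g_{ij|} = S(g_{ij}) − g_{im}N^m_j − g_{mj}N^m_i`
of the metric tensor with respect to a pair (semispray `S`, connection `N`). -/
noncomputable def dynCov {n : ℕ} (g : TP n → Fin n → Fin n → ℝ)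
    (S : TP n → TP n) (N : TP n → Fin n → Fin n → ℝ) (p : TP n) (i j : Fin n) : ℝ :=
  fderiv ℝ (fun q => g q i j) p (S p)
    - (∑ m, g p i m * N p m j) - ∑ m, g p m j * N p m i

/-- if the canonical nonlinear connection `N₀` is metric for the canonical
semispray `S₀` and the Cartan tensor is totally symmetric, then for the evolution pair
`S = S₀ + (1/2)V`, `N^i_j = N₀^i_j − (1/4)∂V^i/∂y^j`, one has
`g_{ij|} = (1/4)(∂σ_i/∂y^j + ∂σ_j/∂y^i)` with `σ_i = g_{ij}V^j`; hence the evolution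
connection is metric iff `∂σ_i/∂y^j` is skew-symmetric in `i,j`. -/
theorem stmt5 {n : ℕ} (g : TP n → Fin n → Fin n → ℝ)
    (S₀ : TP n → TP n) (N₀ : TP n → Fin n → Fin n → ℝ) (V : TP n → Fin n → ℝ)
    (hg : ∀ i j, ContDiff ℝ (⊤ : ℕ∞) (fun p => g p i j))
    (hV : ∀ i, ContDiff ℝ (⊤ : ℕ∞) (fun p => V p i))
    (hgsym : ∀ p i j, g p i j = g p j i)
    (hCartan : ∀ (p : TP n) (i j k : Fin n),
      pdy k (fun q => g q i j) p = pdy j (fun q => g q i k) p)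
    (hmetric : ∀ (p : TP n) (i j : Fin n), dynCov g S₀ N₀ p i j = 0) :
    (∀ (p : TP n) (i j : Fin n),
      dynCov g (fun p => S₀ p + (1/2 : ℝ) • (((0 : Fin n → ℝ), V p) : TP n))
        (fun p i j => N₀ p i j - (1/4) * pdy j (fun q => V q i) p) p i j =
      (1/4) * (pdy j (fun q => ∑ k, g q i k * V q k) p
             + pdy i (fun q => ∑ k, g q j k * V q k) p)) ∧
    ((∀ (p : TP n) (i j : Fin n),
      dynCov g (fun p => S₀ p + (1/2 : ℝ) • (((0 : Fin n → ℝ), V p) : TP n))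
        (fun p i j => N₀ p i j - (1/4) * pdy j (fun q => V q i) p) p i j = 0) ↔
     (∀ (p : TP n) (i j : Fin n),
      pdy j (fun q => ∑ k, g q i k * V q k) p
        = - pdy i (fun q => ∑ k, g q j k * V q k) p)) := by
  have key : ∀ (p : TP n) (i j : Fin n),
      dynCov g (fun p => S₀ p + (1/2 : ℝ) • (((0 : Fin n → ℝ), V p) : TP n))
        (fun p i j => N₀ p i j - (1/4) * pdy j (fun q => V q i) p) p i j =
      (1/4) * (pdy j (fun q => ∑ k, g q i k * V q k) p
             + pdy i (fun q => ∑ k, g q j k * V q k) p) := by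
    intro p i j
    have hgd : ∀ a b : Fin n, DifferentiableAt ℝ (fun q => g q a b) p :=
      fun a b => ((hg a b).differentiable (by simp)).differentiableAt
    have hVd : ∀ a : Fin n, DifferentiableAt ℝ (fun q => V q a) p :=
      fun a => ((hV a).differentiable (by simp)).differentiableAt
    -- product rule for σ
    have hsigma : ∀ (a b : Fin n),
        pdy b (fun q => ∑ k, g q a k * V q k) p
          = ∑ k, (g p a k * pdy b (fun q => V q k) p
                + V p k * pdy b (fun q => g q a k) p) := by
      intro a b
      have h1 : fderiv ℝ (fun q => ∑ k, g q a k * V q k) p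
          = ∑ k, fderiv ℝ (fun q => g q a k * V q k) p :=
        fderiv_fun_sum (fun k _ => (hgd a k).mul (hVd k))
      simp only [pdy, h1, ContinuousLinearMap.sum_apply]
      refine Finset.sum_congr rfl fun k _ => ?_
      rw [fderiv_fun_mul (hgd a k) (hVd k)]
      simp [mul_comm]
    -- decompose (0, V p)
    have hdec : (((0 : Fin n → ℝ), V p) : TP n)
        = ∑ k, V p k • (((0 : Fin n → ℝ), Pi.single k 1) : TP n) := by
      refine Prod.ext ?_ ?_
      · simp [Prod.fst_sum]
      · funext l
        simp [Prod.snd_sum, Finset.sum_apply, Pi.single_apply, mul_ite]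
    have hD : fderiv ℝ (fun q => g q i j) p
          (S₀ p + (1/2 : ℝ) • (((0 : Fin n → ℝ), V p) : TP n))
        = fderiv ℝ (fun q => g q i j) p (S₀ p)
          + (1/2) * ∑ k, V p k * pdy k (fun q => g q i j) p := by
      rw [hdec, map_add, map_smul, map_sum, smul_eq_mul, Finset.mul_sum]
      simp only [map_smul, smul_eq_mul, pdy, Finset.mul_sum]
    have hm := hmetric p i j
    unfold dynCov at hm ⊢
    rw [hD, hsigma, hsigma]
    -- rewrite sums
    have e1 : ∑ m, g p i m * (N₀ p m j - 1/4 * pdy j (fun q => V q m) p)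
        = (∑ m, g p i m * N₀ p m j) - (1/4) * ∑ m, g p i m * pdy j (fun q => V q m) p := by
      rw [Finset.mul_sum, ← Finset.sum_sub_distrib]
      refine Finset.sum_congr rfl fun m _ => by ring
    have e2 : ∑ m, g p m j * (N₀ p m i - 1/4 * pdy i (fun q => V q m) p)
        = (∑ m, g p m j * N₀ p m i) - (1/4) * ∑ m, g p j m * pdy i (fun q => V q m) p := by
      rw [Finset.mul_sum, ← Finset.sum_sub_distrib]
      refine Finset.sum_congr rfl fun m _ => by rw [hgsym p m j]; ring
    rw [e1, e2]
    have e3 : ∑ k, (g p i k * pdy j (fun q => V q k) p + V p k * pdy j (fun q => g q i k) p)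
        = (∑ k, g p i k * pdy j (fun q => V q k) p)
          + ∑ k, V p k * pdy k (fun q => g q i j) p := by
      rw [← Finset.sum_add_distrib]
      refine Finset.sum_congr rfl fun k _ => by rw [hCartan p i j k]
    have e4 : ∑ k, (g p j k * pdy i (fun q => V q k) p + V p k * pdy i (fun q => g q j k) p)
        = (∑ k, g p j k * pdy i (fun q => V q k) p)
          + ∑ k, V p k * pdy k (fun q => g q i j) p := by
      rw [← Finset.sum_add_distrib]
      refine Finset.sum_congr rfl fun k _ => ?_
      have hfun : (fun q => g q j i) = fun q => g q i j := funext fun q => hgsym q j i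
      rw [← hCartan p j i k, hfun]
    rw [e3, e4]
    linarith [hm]
  refine ⟨key, ?_⟩
  constructor
  · intro h p i j
    have h1 := key p i j
    have h2 := h p i j
    rw [h2] at h1
    linarith
  · intro h p i j
    rw [key p i j, h p i j]
    ring
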